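/- Let T : ℤ^ℕ → ℤ^ℕ be T(p_1,p_2,…) = (p_1 − 2p_2, p_2 − 2p_3, …). Then the alternating sequence (1,0,1,0,1,0,…) is not in the image of T. Consequently T has dense but non-closed image, so the automatic closure theorem fails for inverse limits of finitely generated free abelian groups. -/

import Mathlib

/-- Partial solution with fuel: `aux q (m+1) i = q i + 2 * aux q m (i+1)`. -/
def aux (q : ℕ → ℤ) : ℕ → ℕ → ℤ
  | 0, _ => 0
  | m + 1, i => q i + 2 * aux q m (i + 1)

lemma notmem :
    (fun i : ℕ => if i % 2 = 0 then (1 : ℤ) else 0) ∉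
        Set.range (fun p : ℕ → ℤ => fun i => p i - 2 * p (i + 1)) := by
  rintro ⟨p, hp⟩
  have hp' : ∀ i, p i - 2 * p (i + 1) = if i % 2 = 0 then (1 : ℤ) else 0 :=
    fun i => congrFun hp i
  have key : ∀ k : ℕ, 3 * p 0 + 1 = 4 ^ k * (3 * p (2 * k) + 1) := by
    intro k
    induction k with
    | zero => simp
    | succ n ih =>
      have h1 : p (2 * n) - 2 * p (2 * n + 1) = 1 := by
        have := hp' (2 * n); rwa [if_pos (by omega)] at this
      have h2 : p (2 * n + 1) - 2 * p (2 * n + 1 + 1) = 0 := by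
        have := hp' (2 * n + 1); rwa [if_neg (by omega)] at this
      have e1 : 2 * (n + 1) = 2 * n + 1 + 1 := by ring
      rw [ih, e1]
      linear_combination (4:ℤ) ^ n * (3 * h1 + 6 * h2)
  set M : ℤ := 3 * p 0 + 1 with hM
  have hMne : M ≠ 0 := by
    intro h
    omega
  set k : ℕ := M.natAbs with hk
  have hdvd : (4 : ℤ) ^ k ∣ M := ⟨3 * p (2 * k) + 1, key k⟩
  have hle : (4 : ℤ) ^ k ≤ |M| := Int.le_of_dvd (abs_pos.mpr hMne) ((dvd_abs _ _).mpr hdvd)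
  have hlt : |M| < (4 : ℤ) ^ k := by
    have h1 : k < 2 ^ k := Nat.lt_two_pow_self (n := k)
    have h2 : (2 : ℕ) ^ k ≤ 4 ^ k := Nat.pow_le_pow_left (by norm_num) k
    have h3 : (k : ℤ) < (4 : ℤ) ^ k := by exact_mod_cast lt_of_lt_of_le h1 h2
    calc |M| = (M.natAbs : ℤ) := Int.abs_eq_natAbs M
      _ < (4 : ℤ) ^ k := h3
  exact absurd hle (not_le.mpr hlt)

lemma dense_range :
    Dense (Set.range (fun p : ℕ → ℤ => fun i => p i - 2 * p (i + 1))) := by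
  intro q
  have haux : ∀ n i, i < n →
      aux q (n - i) i - 2 * aux q (n - (i + 1)) (i + 1) = q i := by
    intro n i hi
    have : n - i = (n - (i + 1)) + 1 := by omega
    rw [this, aux]
    ring
  refine mem_closure_of_tendsto (f := fun n : ℕ => fun i => aux q (n - i) i - 2 * aux q (n - (i+1)) (i+1)) (b := (Filter.atTop : Filter ℕ)) ?_ ?_
  · rw [tendsto_pi_nhds]
    intro i
    have : ∀ n ≥ i + 1, (fun n : ℕ => aux q (n - i) i - 2 * aux q (n - (i+1)) (i+1)) n = q i := by
      intro n hn
      exact haux n i (by omega)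
    refine Filter.Tendsto.congr' ?_ tendsto_const_nhds
    filter_upwards [Filter.eventually_ge_atTop (i + 1)] with n hn
    exact (this n hn).symm
  · filter_upwards with n
    exact ⟨fun i => aux q (n - i) i, rfl⟩

theorem stmt16 :
    (fun i : ℕ => if i % 2 = 0 then (1 : ℤ) else 0) ∉
        Set.range (fun p : ℕ → ℤ => fun i => p i - 2 * p (i + 1)) ∧
      Dense (Set.range (fun p : ℕ → ℤ => fun i => p i - 2 * p (i + 1))) ∧
      ¬ IsClosed (Set.range (fun p : ℕ → ℤ => fun i => p i - 2 * p (i + 1))) := by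
  refine ⟨notmem, dense_range, ?_⟩
  intro hcl
  have := hcl.closure_eq
  rw [dense_range.closure_eq] at this
  exact notmem (this ▸ Set.mem_univ _)
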